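/- Let G be a countable directed graph, F a potential on G, β ∈ ℝ, and m an e^{βF}-conformal measure on P(G). Then the vector ψ defined by ψ_v = m(Z(v)) for v ∈ G_V is an A(β)-harmonic vector: it is non-zero, takes finite non-negative values, and satisfies ψ_v = Σ_{a : s(a) = v} e^{-βF(a)} ψ_{r(a)} for every vertex v. -/

import Mathlib

open MeasureTheory
open scoped ENNReal

/-- A countable directed graph: countable sets of vertices and arrows together with
source and range maps. -/
structure CDG where
  V : Type
  A : Type
  countV : Countable V
  countA : Countable A
  src : A → V
  rng : A → V

attribute [instance] CDG.countV CDG.countA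

namespace CDG

/-- The space `P(G)` of infinite paths in `G`. -/
abbrev PathSpace (G : CDG) : Type :=
  {p : ℕ → G.A // ∀ i : ℕ, G.rng (p i) = G.src (p (i + 1))}

/-- The source vertex of an infinite path. -/
def isrc {G : CDG} (p : G.PathSpace) : G.V := G.src (p.1 0)

/-- The shift map `σ` on `P(G)`. -/
def shift {G : CDG} (p : G.PathSpace) : G.PathSpace :=
  ⟨fun i => p.1 (i + 1), fun i => p.2 (i + 1)⟩

/-- A countable set carries the discrete (Borel) σ-algebra. -/
instance (G : CDG) : MeasurableSpace G.A := ⊤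

/-- A finite path in `G`: a base vertex together with a (possibly empty) string of
composable arrows starting at the base vertex.  A finite path with no arrows is a vertex. -/
structure FinPath (G : CDG) where
  base : G.V
  arrows : List G.A
  head_src : ∀ a ∈ arrows.head?, G.src a = base
  chain : arrows.Chain' fun a b => G.rng a = G.src b

namespace FinPath

variable {G : CDG}

/-- The length `|μ|` of a finite path. -/
def length (μ : FinPath G) : ℕ := μ.arrows.length

/-- The source `s(μ)` of a finite path. -/
def fsrc (μ : FinPath G) : G.V := μ.base

/-- The range `r(μ)` of a finite path. -/
def frng (μ : FinPath G) : G.V := μ.arrows.getLast?.elim μ.base G.rng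

/-- A vertex, regarded as a finite path of length `0`. -/
def ofVertex (G : CDG) (v : G.V) : FinPath G :=
  ⟨v, [], (by intro a ha; simp at ha), by simp [List.Chain']⟩

/-- Concatenation `μδ` of composable finite paths. -/
def concat (μ δ : FinPath G) (h : δ.base = μ.frng) : FinPath G where
  base := μ.base
  arrows := μ.arrows ++ δ.arrows
  head_src := by
    intro a ha
    cases hμ : μ.arrows with
    | nil =>
        rw [hμ] at ha
        simp only [List.nil_append] at ha
        have h1 : G.src a = δ.base := δ.head_src a ha
        have h2 : μ.frng = μ.base := by simp [FinPath.frng, hμ]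
        rw [h1, h, h2]
    | cons b l =>
        rw [hμ] at ha
        simp only [List.cons_append, List.head?_cons, Option.mem_def,
          Option.some.injEq] at ha
        cases ha
        exact μ.head_src _ (by rw [hμ]; rfl)
  chain := by
    refine List.IsChain.append μ.chain δ.chain ?_
    intro x hx y hy
    rw [Option.mem_def] at hx
    have h1 : μ.frng = G.rng x := by simp [FinPath.frng, hx]
    have h2 : G.src y = δ.base := δ.head_src y hy
    rw [h2, h, h1]

end FinPath

/-- The extension of a potential `F : G_Ar → ℝ` to finite paths:
`F(μ) = Σ_{i} F(a_i)`, with `F(v) = 0` for vertices. -/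
def pot {G : CDG} (F : G.A → ℝ) (μ : FinPath G) : ℝ := (μ.arrows.map F).sum

/-- The cylinder set `Z(μ)` of a finite path `μ`. -/
def cyl {G : CDG} (μ : FinPath G) : Set G.PathSpace :=
  {p | G.src (p.1 0) = μ.base ∧
    ∀ (i : ℕ) (h : i < μ.arrows.length), p.1 i = μ.arrows.get ⟨i, h⟩}

/-- The cylinder set `Z(v)` of a vertex `v`. -/
def cylV (G : CDG) (v : G.V) : Set G.PathSpace := {p | G.src (p.1 0) = v}

/-- An `e^{βF}`-conformal measure on `P(G)`: a non-zero Borel measure giving finite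
measure to each `Z(v)` and satisfying `m(σ(B ∩ Z(a))) = e^{βF(a)} m(B ∩ Z(a))`. -/
structure IsConformal (G : CDG) (F : G.A → ℝ) (β : ℝ)
    (m : Measure G.PathSpace) : Prop where
  ne_zero : m ≠ 0
  vert_fin : ∀ v : G.V, m (cylV G v) < ⊤
  conformal : ∀ (a : G.A) (B : Set G.PathSpace), MeasurableSet B →
      m (shift '' (B ∩ {p : G.PathSpace | p.1 0 = a})) =
        ENNReal.ofReal (Real.exp (β * F a)) * m (B ∩ {p : G.PathSpace | p.1 0 = a})

/-- The set `NW_G` of non-wandering vertices: those supporting a loop. -/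
def NW (G : CDG) : Set G.V :=
  {v | ∃ μ : FinPath G, 0 < μ.length ∧ μ.fsrc = v ∧ μ.frng = v}

/-- The set `V_∞` of sinks and infinite emitters. -/
def Vinf (G : CDG) : Set G.V :=
  {v | (∀ a : G.A, G.src a ≠ v) ∨ {a : G.A | G.src a = v}.Infinite}

/-- A hereditary subset of vertices. -/
def Hereditary (G : CDG) (H : Set G.V) : Prop :=
  ∀ a : G.A, G.src a ∈ H → G.rng a ∈ H

/-- A saturated subset of vertices. -/
def Saturated (G : CDG) (H : Set G.V) : Prop :=
  ∀ v : G.V, v ∉ Vinf G → (∀ a : G.A, G.src a = v → G.rng a ∈ H) → v ∈ H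

/-- `G` is cofinal when the only non-empty hereditary and saturated subset of
vertices is the set of all vertices. -/
def Cofinal (G : CDG) : Prop :=
  ∀ H : Set G.V, H.Nonempty → Hereditary G H → Saturated G H → H = Set.univ

/-- `P(G)_rec`: the paths passing through every arrow of `NW_Ar` infinitely often. -/
def recSet (G : CDG) : Set G.PathSpace :=
  {p | ∀ a : G.A, G.src a ∈ NW G → ∀ n : ℕ, ∃ i ≥ n, p.1 i = a}

/-- `P(G)_wan`: the paths visiting every vertex at most finitely many times. -/
def wanSet (G : CDG) : Set G.PathSpace :=
  {p | ∀ v : G.V, {i : ℕ | G.src (p.1 i) = v}.Finite}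

/-- The matrix entry `A(β)^n_{v,w} = Σ_μ e^{-βF(μ)} ∈ [0,∞]`, summing over finite
paths `μ` of length `n` with `s(μ) = v` and `r(μ) = w`. -/
noncomputable def Apow (G : CDG) (F : G.A → ℝ) (β : ℝ) (n : ℕ) (v w : G.V) : ℝ≥0∞ :=
  ∑' μ : {μ : FinPath G // μ.length = n ∧ μ.fsrc = v ∧ μ.frng = w},
    ENNReal.ofReal (Real.exp (-(β * pot F μ.1)))

/-- An `A(β)`-harmonic vector: non-zero, finite, non-negative, and harmonic at
every vertex. -/
def IsHarmonicVec (G : CDG) (F : G.A → ℝ) (β : ℝ) (ψ : G.V → ℝ≥0∞) : Prop :=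
  ψ ≠ 0 ∧ (∀ v : G.V, ψ v ≠ ⊤) ∧
    ∀ v : G.V, ψ v =
      ∑' a : {a : G.A // G.src a = v},
        ENNReal.ofReal (Real.exp (-(β * F a.1))) * ψ (G.rng a.1)

end CDG

open CDG

lemma cylA_measurable (G : CDG) (a : G.A) :
    MeasurableSet {p : G.PathSpace | p.1 0 = a} := by
  have h : Measurable fun p : G.PathSpace => p.1 0 :=
    (measurable_pi_apply 0).comp measurable_subtype_coe
  exact h (show MeasurableSet {a} from MeasurableSpace.measurableSet_top)

lemma shift_image_cylA (G : CDG) (a : G.A) :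
    shift '' {p : G.PathSpace | p.1 0 = a} = cylV G (G.rng a) := by
  ext q
  constructor
  · rintro ⟨p, hp, rfl⟩
    have h0 := p.2 0
    simp only [Set.mem_setOf_eq] at hp
    show G.src ((shift p).1 0) = G.rng a
    simp [shift, ← h0, hp]
  · intro hq
    have hchain : ∀ i : ℕ, G.rng ((fun i => Nat.rec a (fun j _ => q.1 j) i) i) =
        G.src ((fun i => Nat.rec a (fun j _ => q.1 j) i) (i + 1)) := by
      intro i
      cases i with
      | zero => exact hq.symm
      | succ j => exact q.2 j
    refine ⟨⟨fun i => Nat.rec a (fun j _ => q.1 j) i, hchain⟩, ?_, ?_⟩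
    · show (Nat.rec a (fun j _ => q.1 j) 0 : G.A) = a
      rfl
    · apply Subtype.ext
      funext i
      rfl

lemma cylA_eq (G : CDG) (F : G.A → ℝ) (β : ℝ) (m : MeasureTheory.Measure G.PathSpace)
    (hm : IsConformal G F β m) (a : G.A) :
    m {p : G.PathSpace | p.1 0 = a} =
      ENNReal.ofReal (Real.exp (-(β * F a))) * m (cylV G (G.rng a)) := by
  have hc := hm.conformal a Set.univ MeasurableSet.univ
  rw [Set.univ_inter, shift_image_cylA] at hc
  have hone : ENNReal.ofReal (Real.exp (-(β * F a))) *
      ENNReal.ofReal (Real.exp (β * F a)) = 1 := by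
    rw [← ENNReal.ofReal_mul (Real.exp_nonneg _), Real.exp_neg,
      inv_mul_cancel₀ (Real.exp_ne_zero _), ENNReal.ofReal_one]
  calc m {p : G.PathSpace | p.1 0 = a}
      = (ENNReal.ofReal (Real.exp (-(β * F a))) *
          ENNReal.ofReal (Real.exp (β * F a))) * m {p : G.PathSpace | p.1 0 = a} := by
        rw [hone, one_mul]
    _ = ENNReal.ofReal (Real.exp (-(β * F a))) *
          (ENNReal.ofReal (Real.exp (β * F a)) * m {p : G.PathSpace | p.1 0 = a}) := by
        ring
    _ = ENNReal.ofReal (Real.exp (-(β * F a))) * m (cylV G (G.rng a)) := by rw [← hc]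

open CDG in
/-- for an `e^{βF}`-conformal measure `m`, the vector `v ↦ m(Z(v))` is an
`A(β)`-harmonic vector. -/
theorem stmt11 (G : CDG) (F : G.A → ℝ) (β : ℝ) (m : MeasureTheory.Measure G.PathSpace)
    (hm : IsConformal G F β m) :
    IsHarmonicVec G F β (fun v => m (cylV G v)) := by
  have hdecomp : ∀ v : G.V, m (cylV G v) =
      ∑' a : {a : G.A // G.src a = v}, m {p : G.PathSpace | p.1 0 = a.1} := by
    intro v
    have hU : cylV G v = ⋃ a : {a : G.A // G.src a = v},
        {p : G.PathSpace | p.1 0 = a.1} := by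
      ext p
      constructor
      · intro hp
        exact Set.mem_iUnion.2 ⟨⟨p.1 0, hp⟩, rfl⟩
      · rintro hp
        rcases Set.mem_iUnion.1 hp with ⟨a, ha⟩
        simp only [Set.mem_setOf_eq] at ha
        show G.src (p.1 0) = v
        rw [ha, a.2]
    rw [hU, measure_iUnion]
    · intro a b hab
      simp only [Function.onFun, Set.disjoint_left]
      intro p hpa hpb
      exact hab (Subtype.ext (hpa.symm.trans hpb))
    · intro a
      exact cylA_measurable G a.1
  refine ⟨?_, fun v => (hm.vert_fin v).ne, ?_⟩
  · intro h0
    apply hm.ne_zero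
    have huniv : (Set.univ : Set G.PathSpace) = ⋃ v : G.V, cylV G v := by
      ext p
      simp only [Set.mem_univ, true_iff, Set.mem_iUnion]
      exact ⟨G.src (p.1 0), rfl⟩
    have : m Set.univ = 0 := by
      rw [huniv]
      refine le_antisymm (le_trans (measure_iUnion_le _) ?_) zero_le
      have : ∀ v : G.V, m (cylV G v) = 0 := fun v => congrFun h0 v
      simp [this]
    ext s _
    simp [measure_mono_null (Set.subset_univ s) this]
  · intro v
    simp only []
    rw [hdecomp v]
    congr 1
    funext a
    exact cylA_eq G F β m hm a.1
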